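/- arXiv:1707.00293 — 10 statements merged into one kernel-verified Lean document; each statement's English description precedes it below -/
import Mathlib

section
/- Let W be the real vector space of n×n Hermitian complex matrices. For traceless Hermitian a define X_a : W → W by X_a(ξ) := [[ξ, a]] = (i/2)(ξa − aξ), and for traceless Hermitian b define the (gradient-like) vector field Y_b : W → W by Y_b(ξ) := b⊙ξ − Tr(bξ)·ξ (note Tr(bξ) is real for Hermitian b, ξ). With the vector-field commutator [F, G](ξ) := DG(ξ)[F(ξ)] − DF(ξ)[G(ξ)], one has [X_a, Y_b] = Y_{[[a,b]]} for all traceless Hermitian a, b. -/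
open Matrix

attribute [local instance] Matrix.frobeniusNormedAddCommGroup Matrix.frobeniusNormedSpace

/-- The Jordan product of two complex matrices: `x ⊙ y = (xy + yx)/2`. -/
noncomputable def jordanProd {n : ℕ} (x y : Matrix (Fin n) (Fin n) ℂ) :
    Matrix (Fin n) (Fin n) ℂ :=
  (1 / 2 : ℂ) • (x * y + y * x)

/-- The Lie product of two complex matrices: `[[x, y]] = (i/2)(xy − yx)`. -/
noncomputable def lieProd {n : ℕ} (x y : Matrix (Fin n) (Fin n) ℂ) :
    Matrix (Fin n) (Fin n) ℂ :=
  (Complex.I / 2) • (x * y - y * x)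

/-- The Hamiltonian vector field associated with a (traceless Hermitian) matrix `a`:
`X_a(ξ) := [[ξ, a]]`. -/
noncomputable def hamVF {n : ℕ} (a : Matrix (Fin n) (Fin n) ℂ) :
    Matrix (Fin n) (Fin n) ℂ → Matrix (Fin n) (Fin n) ℂ :=
  fun ξ => lieProd ξ a

/-- The gradient-like vector field associated with a (traceless Hermitian) matrix `b`:
`Y_b(ξ) := b ⊙ ξ − Tr(bξ)·ξ`. -/
noncomputable def gradVF {n : ℕ} (b : Matrix (Fin n) (Fin n) ℂ) :
    Matrix (Fin n) (Fin n) ℂ → Matrix (Fin n) (Fin n) ℂ :=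
  fun ξ => jordanProd b ξ - (Matrix.trace (b * ξ)) • ξ

/-- `ξ ↦ lieProd ξ a` as a real-linear continuous map. -/
noncomputable def lieRightCLM {n : ℕ} (a : Matrix (Fin n) (Fin n) ℂ) :
    Matrix (Fin n) (Fin n) ℂ →L[ℝ] Matrix (Fin n) (Fin n) ℂ :=
  LinearMap.toContinuousLinearMap
  { toFun := fun ξ => lieProd ξ a
    map_add' := by
      intro x y
      simp only [lieProd, add_mul, mul_add]
      module
    map_smul' := by
      intro r x
      show (Complex.I / 2) • ((r • x) * a - a * (r • x)) =
        r • ((Complex.I / 2) • (x * a - a * x))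
      rw [Matrix.smul_mul, Matrix.mul_smul, ← smul_sub, smul_comm] }

@[simp] lemma lieRightCLM_apply {n : ℕ} (a x : Matrix (Fin n) (Fin n) ℂ) :
    lieRightCLM a x = lieProd x a := rfl

/-- `ξ ↦ jordanProd b ξ` as a real-linear continuous map. -/
noncomputable def jordanLeftCLM {n : ℕ} (b : Matrix (Fin n) (Fin n) ℂ) :
    Matrix (Fin n) (Fin n) ℂ →L[ℝ] Matrix (Fin n) (Fin n) ℂ :=
  LinearMap.toContinuousLinearMap
  { toFun := fun ξ => jordanProd b ξ
    map_add' := by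
      intro x y
      simp only [jordanProd, add_mul, mul_add]
      module
    map_smul' := by
      intro r x
      show (1 / 2 : ℂ) • (b * (r • x) + (r • x) * b) =
        r • ((1 / 2 : ℂ) • (b * x + x * b))
      rw [Matrix.smul_mul, Matrix.mul_smul, ← smul_add, smul_comm] }

@[simp] lemma jordanLeftCLM_apply {n : ℕ} (b x : Matrix (Fin n) (Fin n) ℂ) :
    jordanLeftCLM b x = jordanProd b x := rfl

/-- `ξ ↦ trace (b * ξ)` as a real-linear continuous map into ℂ. -/
noncomputable def traceMulCLM {n : ℕ} (b : Matrix (Fin n) (Fin n) ℂ) :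
    Matrix (Fin n) (Fin n) ℂ →L[ℝ] ℂ :=
  LinearMap.toContinuousLinearMap
  { toFun := fun ξ => Matrix.trace (b * ξ)
    map_add' := by intro x y; simp [mul_add]
    map_smul' := by intro r x; simp [Matrix.mul_smul] }

@[simp] lemma traceMulCLM_apply {n : ℕ} (b x : Matrix (Fin n) (Fin n) ℂ) :
    traceMulCLM b x = Matrix.trace (b * x) := rfl

/-- On the real vector space of Hermitian matrices, the Hamiltonian vector field
`X_a(ξ) = [[ξ, a]]` and the gradient-like vector field `Y_b(ξ) = b ⊙ ξ − Tr(bξ)·ξ`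
associated with traceless Hermitian matrices satisfy `[X_a, Y_b] = Y_{[[a,b]]}`,
where the commutator of vector fields is `[F, G](ξ) := DG(ξ)[F(ξ)] − DF(ξ)[G(ξ)]`
with `D` the Fréchet derivative. -/
theorem hamVF_gradVF_commutator {n : ℕ} (a b : Matrix (Fin n) (Fin n) ℂ)
    (ha : a.IsHermitian) (hb : b.IsHermitian)
    (ha0 : a.trace = 0) (hb0 : b.trace = 0) :
    ∀ ξ : Matrix (Fin n) (Fin n) ℂ, ξ.IsHermitian →
      fderiv ℝ (gradVF b) ξ (hamVF a ξ) - fderiv ℝ (hamVF a) ξ (gradVF b ξ) =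
        gradVF (lieProd a b) ξ := by
  intro ξ _
  have hham : HasFDerivAt (hamVF a) (lieRightCLM a) ξ :=
    (lieRightCLM a).hasFDerivAt
  have htr : HasFDerivAt (fun ξ : Matrix (Fin n) (Fin n) ℂ => Matrix.trace (b * ξ))
      (traceMulCLM b) ξ := (traceMulCLM b).hasFDerivAt
  have hsmul : HasFDerivAt (fun ξ : Matrix (Fin n) (Fin n) ℂ => Matrix.trace (b * ξ) • ξ)
      (Matrix.trace (b * ξ) • ContinuousLinearMap.id ℝ _ + (traceMulCLM b).smulRight ξ) ξ :=
    htr.smul (hasFDerivAt_id ξ)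
  have hgrad : HasFDerivAt (gradVF b)
      (jordanLeftCLM b -
        (Matrix.trace (b * ξ) • ContinuousLinearMap.id ℝ _ + (traceMulCLM b).smulRight ξ)) ξ :=
    ((jordanLeftCLM b).hasFDerivAt.sub hsmul)
  rw [hham.fderiv, hgrad.fderiv]
  simp only [ContinuousLinearMap.sub_apply, ContinuousLinearMap.add_apply,
    ContinuousLinearMap.smul_apply, ContinuousLinearMap.id_apply,
    ContinuousLinearMap.smulRight_apply, lieRightCLM_apply, jordanLeftCLM_apply,
    traceMulCLM_apply]
  have htr2 : Matrix.trace (b * hamVF a ξ) = Matrix.trace (lieProd a b * ξ) := by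
    simp only [hamVF, lieProd, Matrix.mul_smul, Matrix.smul_mul, Matrix.trace_smul,
      mul_sub, sub_mul, Matrix.trace_sub, ← mul_assoc]
    rw [Matrix.trace_mul_cycle b ξ a]
  rw [htr2]
  simp only [gradVF, hamVF, jordanProd, lieProd, mul_sub, sub_mul, mul_add, add_mul,
    Matrix.mul_smul, Matrix.smul_mul, smul_sub, smul_add, smul_smul, mul_assoc]
  module
end

section
/- Let a, b be traceless n×n Hermitian complex matrices, let A := a + i·b, and let g_t := exp((t/2)·A) for t ∈ ℝ. Let ρ be a positive semidefinite n×n complex matrix with Tr(ρ) = 1. Then for every t ∈ ℝ one has Tr(g_t ρ g_tᴴ) > 0 (a positive real number), and the curve γ(t) := g_t ρ g_tᴴ / Tr(g_t ρ g_tᴴ) is differentiable with derivative γ'(t) = (i/2)(b·γ(t) − γ(t)·b) + (1/2)(a·γ(t) + γ(t)·a) − Tr(a·γ(t))·γ(t) for all t ∈ ℝ. In other words, the normalized congruence action of the one-parameter subgroup exp(tA/2) of SL(n, ℂ) on quantum states is the integral curve of the sum of the Hamiltonian vector field of b and the gradient-like vector field of a. -/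
open Matrix
open scoped ComplexOrder

attribute [local instance]
  Matrix.linftyOpNormedAddCommGroup Matrix.linftyOpNormedRing
  Matrix.linftyOpNormedAlgebra

lemma aux_trace_conjTranspose_mul_self_pos {m k : ℕ}
    (M : Matrix (Fin m) (Fin k) ℂ) (hM : M ≠ 0) :
    ∃ r : ℝ, 0 < r ∧ (Mᴴ * M).trace = (r : ℂ) := by
  refine ⟨∑ j : Fin k, ∑ i : Fin m, Complex.normSq (M i j), ?_, ?_⟩
  · obtain ⟨i, j, hij⟩ : ∃ i j, M i j ≠ 0 := by
      by_contra h
      push_neg at h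
      exact hM (by ext i j; simp [h i j])
    have hterm : 0 < Complex.normSq (M i j) := by
      simpa [Complex.normSq_pos] using hij
    have h1 : 0 < ∑ i' : Fin m, Complex.normSq (M i' j) :=
      Finset.sum_pos' (fun i' _ => Complex.normSq_nonneg _) ⟨i, Finset.mem_univ i, hterm⟩
    exact Finset.sum_pos'
      (fun j' _ => Finset.sum_nonneg fun i' _ => Complex.normSq_nonneg _)
      ⟨j, Finset.mem_univ j, h1⟩
  · simp only [Matrix.trace, Matrix.diag, Matrix.mul_apply, Matrix.conjTranspose_apply]
    push_cast
    congr 1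
    ext j
    congr 1
    ext i
    rw [Complex.normSq_eq_conj_mul_self]
    rfl

lemma aux_psd_eq {n : ℕ} (ρ : Matrix (Fin n) (Fin n) ℂ) (hρ : ρ.PosSemidef) :
    ∃ C : Matrix (Fin n) (Fin n) ℂ, ρ = Cᴴ * C := by
  open scoped MatrixOrder in
  obtain ⟨C, hC⟩ := CStarAlgebra.nonneg_iff_eq_star_mul_self.mp hρ.nonneg
  exact ⟨C, hC⟩

/-- The normalized congruence action of the one-parameter subgroup `exp(tA/2)` of
`SL(n, ℂ)`, with `A = a + i·b` for traceless Hermitian `a`, `b`, on a quantum state `ρ`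
(positive semidefinite, trace one) is well defined (the normalizing trace is a positive
real number) and is the integral curve of the sum of the Hamiltonian vector field of `b`
and the gradient-like vector field of `a`:
`γ'(t) = (i/2)(b·γ(t) − γ(t)·b) + (1/2)(a·γ(t) + γ(t)·a) − Tr(a·γ(t))·γ(t)`. -/
theorem integral_curve_of_normalized_sl_action {n : ℕ}
    (a b : Matrix (Fin n) (Fin n) ℂ)
    (ha : a.IsHermitian) (hb : b.IsHermitian)
    (ha0 : a.trace = 0) (hb0 : b.trace = 0)
    (A : Matrix (Fin n) (Fin n) ℂ) (hA : A = a + Complex.I • b)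
    (g : ℝ → Matrix (Fin n) (Fin n) ℂ)
    (hg : ∀ t : ℝ, g t = NormedSpace.exp (((t : ℂ) / 2) • A))
    (ρ : Matrix (Fin n) (Fin n) ℂ) (hρ : ρ.PosSemidef) (hρtr : ρ.trace = 1)
    (γ : ℝ → Matrix (Fin n) (Fin n) ℂ)
    (hγ : ∀ t : ℝ, γ t = (Matrix.trace (g t * ρ * (g t)ᴴ))⁻¹ • (g t * ρ * (g t)ᴴ)) :
    ∀ t : ℝ,
      (∃ r : ℝ, 0 < r ∧ Matrix.trace (g t * ρ * (g t)ᴴ) = (r : ℂ)) ∧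
      HasDerivAt γ
        ((Complex.I / 2) • (b * γ t - γ t * b) + (1 / 2 : ℂ) • (a * γ t + γ t * a)
          - (Matrix.trace (a * γ t)) • γ t) t := by
  -- setup
  set B : Matrix (Fin n) (Fin n) ℂ := (1 / 2 : ℂ) • A with hBdef
  have hg' : ∀ t : ℝ, g t = NormedSpace.exp ((t : ℂ) • B) := by
    intro t
    rw [hg t, hBdef, smul_smul]
    ring_nf
  have hgH : ∀ t : ℝ, (g t)ᴴ = NormedSpace.exp ((t : ℂ) • Bᴴ) := by
    intro t
    rw [hg' t, ← Matrix.exp_conjTranspose]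
    congr 1
    rw [Matrix.conjTranspose_smul]
    simp
  -- obtain the matrix square root of ρ
  obtain ⟨C, hC⟩ := aux_psd_eq ρ hρ
  have hC0 : C ≠ 0 := by
    intro h
    rw [h] at hC
    simp [hC] at hρtr
  -- positivity of the trace at every time
  have hpos : ∀ t : ℝ, ∃ r : ℝ, 0 < r ∧
      Matrix.trace (g t * ρ * (g t)ᴴ) = (r : ℂ) := by
    intro t
    have hunit : IsUnit ((g t)ᴴ) := by
      rw [hgH t]; exact Matrix.isUnit_exp _
    have hM0 : C * (g t)ᴴ ≠ 0 := by
      intro h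
      obtain ⟨u, hu⟩ := hunit
      apply hC0
      have : C * ((g t)ᴴ * (↑u⁻¹ : Matrix (Fin n) (Fin n) ℂ)) = 0 := by
        rw [← Matrix.mul_assoc, h, Matrix.zero_mul]
      rwa [← hu, Units.mul_inv, Matrix.mul_one] at this
    obtain ⟨r, hr, hrtr⟩ := aux_trace_conjTranspose_mul_self_pos (C * (g t)ᴴ) hM0
    refine ⟨r, hr, ?_⟩
    rw [← hrtr]
    congr 1
    rw [Matrix.conjTranspose_mul, Matrix.conjTranspose_conjTranspose, hC]
    noncomm_ring
  intro t
  refine ⟨hpos t, ?_⟩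
  -- derivative of g
  have hgd : ∀ s : ℝ, HasDerivAt g (g s * B) s := by
    intro s
    have h1 := HasDerivAt.scomp (𝕜 := ℝ) s
      (hasDerivAt_exp_smul_const (𝕂 := ℂ) B ((s : ℂ))) Complex.ofRealCLM.hasDerivAt
    simp only [Function.comp_def, Complex.ofRealCLM_apply, Complex.ofReal_one, one_smul] at h1
    have : (fun y : ℝ => NormedSpace.exp ((y : ℂ) • B)) = g := by
      funext y; exact (hg' y).symm
    rw [← this]
    exact h1
  have hgHd : ∀ s : ℝ, HasDerivAt (fun y => (g y)ᴴ) ((g s)ᴴ * Bᴴ) s := by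
    intro s
    have h1 := HasDerivAt.scomp (𝕜 := ℝ) s
      (hasDerivAt_exp_smul_const (𝕂 := ℂ) Bᴴ ((s : ℂ))) Complex.ofRealCLM.hasDerivAt
    simp only [Function.comp_def, Complex.ofRealCLM_apply, Complex.ofReal_one, one_smul] at h1
    have : (fun y : ℝ => NormedSpace.exp ((y : ℂ) • Bᴴ)) = fun y => (g y)ᴴ := by
      funext y; exact (hgH y).symm
    rw [← this, hgH s]
    exact h1
  -- commuting B with g
  have hcomm : ∀ s : ℝ, B * g s = g s * B := by
    intro s
    have : Commute B ((s : ℂ) • B) := (Commute.refl B).smul_right _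
    have h2 := this.exp_right
    rw [← hg' s] at h2
    exact h2
  -- derivative of F t = g t * ρ * (g t)ᴴ
  have hF : HasDerivAt (fun s => g s * ρ * (g s)ᴴ)
      (B * (g t * ρ * (g t)ᴴ) + (g t * ρ * (g t)ᴴ) * Bᴴ) t := by
    have h1 := ((hgd t).mul_const ρ).mul (hgHd t)
    refine h1.congr_deriv ?_
    rw [← hcomm t]
    noncomm_ring
  set F : Matrix (Fin n) (Fin n) ℂ := g t * ρ * (g t)ᴴ with hFdef
  set τ : ℂ := F.trace with hτdef
  have hτ0 : τ ≠ 0 := by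
    obtain ⟨r, hr, hrtr⟩ := hpos t
    rw [hτdef, hFdef, hrtr]
    exact_mod_cast hr.ne'
  -- derivative of the trace
  have htrd : HasDerivAt (fun s => Matrix.trace (g s * ρ * (g s)ᴴ))
      (Matrix.trace (B * F + F * Bᴴ)) t := by
    have h1 := ((LinearMap.toContinuousLinearMap
      (Matrix.traceLinearMap (Fin n) ℂ ℂ)).restrictScalars ℝ).hasFDerivAt.comp_hasDerivAt t hF
    exact h1
  have hτ0' : Matrix.trace (g t * ρ * (g t)ᴴ) ≠ 0 := hτ0
  have hinv := HasDerivAt.scomp (𝕜 := ℝ) t (hasDerivAt_inv hτ0') htrd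
  simp only [Function.comp_def] at hinv
  have hsmul := hinv.smul hF
  -- hsmul has the right shape; rewrite the function as γ
  have hfun : (fun y => (Matrix.trace (g y * ρ * (g y)ᴴ))⁻¹ • (g y * ρ * (g y)ᴴ)) = γ := by
    funext y; exact (hγ y).symm
  change HasDerivAt (fun y => (Matrix.trace (g y * ρ * (g y)ᴴ))⁻¹ • (g y * ρ * (g y)ᴴ)) _ t at hsmul
  rw [hfun] at hsmul
  -- conjugate transposes of A and B
  have hBH : Bᴴ = (1 / 2 : ℂ) • (a - Complex.I • b) := by
    rw [hBdef, Matrix.conjTranspose_smul, hA]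
    rw [Matrix.conjTranspose_add, Matrix.conjTranspose_smul, ha.eq, hb.eq]
    simp [Complex.conj_I, sub_eq_add_neg, neg_smul]
  have hB : B = (1 / 2 : ℂ) • (a + Complex.I • b) := by rw [hBdef, hA]
  -- trace identities
  have htrBF : Matrix.trace (B * F + F * Bᴴ) = Matrix.trace (a * F) := by
    rw [Matrix.trace_add, Matrix.trace_mul_comm F Bᴴ, ← Matrix.trace_add, ← Matrix.add_mul]
    congr 2
    rw [hBH, hB]
    module
  have hγt : γ t = τ⁻¹ • F := by rw [hγ t, ← hFdef, ← hτdef]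
  have htraγ : Matrix.trace (a * γ t) = τ⁻¹ * Matrix.trace (a * F) := by
    rw [hγt, Matrix.mul_smul, Matrix.trace_smul, smul_eq_mul]
  -- final algebraic identification of the derivative
  convert hsmul using 1
  rw [hγt, htrBF, hBH, hB, ← hFdef, ← hτdef]
  simp only [Matrix.smul_mul, Matrix.mul_smul, Matrix.add_mul, Matrix.mul_add,
    Matrix.sub_mul, Matrix.mul_sub, smul_add, smul_sub, smul_smul, Matrix.trace_smul,
    smul_eq_mul]
  match_scalars
  all_goals field_simp [hτ0]
  all_goals first
    | ring1
    | exact Or.inl (sq τ)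
end

section
/- Let H be an n×n Hermitian complex matrix, let v_1, …, v_N be n×n complex matrices, set V := Σ_j v_jᴴ v_j, K(ξ) := Σ_j v_j ξ v_jᴴ, and let L(ξ) := −i(Hξ − ξH) − (1/2)(Vξ + ξV) + K(ξ) be the GKLS generator. Define the three vector fields X(ξ) := −i(Hξ − ξH) (Hamiltonian part), Y(ξ) := −V⊙ξ + Tr(Vξ)·ξ (gradient-like part), and Z(ξ) := K(ξ) − Tr(Vξ)·ξ (Kraus part). Then: (1) L(ξ) = X(ξ) + Y(ξ) + Z(ξ) for every ξ, i.e. the quadratic terms of Y and Z cancel and their sum is the linear map ξ ↦ −V⊙ξ + K(ξ); (2) for every Hermitian ξ with Tr(ξ) = 1, each of X(ξ), Y(ξ), Z(ξ) is Hermitian with zero trace, so each of the three vector fields is separately tangent to the affine hyperplane of trace-one Hermitian matrices. -/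
open Matrix

set_option maxHeartbeats 1000000 in
/-- The GKLS generator `L(ξ) = −i(Hξ − ξH) − (1/2)(Vξ + ξV) + K(ξ)` decomposes as the
sum of the Hamiltonian vector field `X(ξ) = −i(Hξ − ξH)`, the gradient-like vector
field `Y(ξ) = −V⊙ξ + Tr(Vξ)·ξ` and the Kraus vector field `Z(ξ) = K(ξ) − Tr(Vξ)·ξ`:
the quadratic terms of `Y` and `Z` cancel, the sum `Y + Z` is the linear map
`ξ ↦ −V⊙ξ + K(ξ)`, and on each trace-one Hermitian `ξ` the values `X(ξ)`, `Y(ξ)`,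
`Z(ξ)` are Hermitian with zero trace, so each of the three vector fields is separately
tangent to the affine hyperplane of trace-one Hermitian matrices. -/
theorem gkls_vector_field_decomposition {n N : ℕ}
    (H : Matrix (Fin n) (Fin n) ℂ) (hH : H.IsHermitian)
    (v : Fin N → Matrix (Fin n) (Fin n) ℂ)
    (V : Matrix (Fin n) (Fin n) ℂ) (hV : V = ∑ j, (v j)ᴴ * v j)
    (K : Matrix (Fin n) (Fin n) ℂ → Matrix (Fin n) (Fin n) ℂ)
    (hK : ∀ ξ, K ξ = ∑ j, v j * ξ * (v j)ᴴ)
    (L X Y Z : Matrix (Fin n) (Fin n) ℂ → Matrix (Fin n) (Fin n) ℂ)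
    (hL : ∀ ξ, L ξ = -Complex.I • (H * ξ - ξ * H) - (1 / 2 : ℂ) • (V * ξ + ξ * V) + K ξ)
    (hX : ∀ ξ, X ξ = -Complex.I • (H * ξ - ξ * H))
    (hY : ∀ ξ, Y ξ = -jordanProd V ξ + (Matrix.trace (V * ξ)) • ξ)
    (hZ : ∀ ξ, Z ξ = K ξ - (Matrix.trace (V * ξ)) • ξ) :
    (∀ ξ : Matrix (Fin n) (Fin n) ℂ, L ξ = X ξ + Y ξ + Z ξ) ∧
    (∀ ξ : Matrix (Fin n) (Fin n) ℂ, Y ξ + Z ξ = -jordanProd V ξ + K ξ) ∧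
    (∀ ξ : Matrix (Fin n) (Fin n) ℂ, ξ.IsHermitian → ξ.trace = 1 →
      ((X ξ).IsHermitian ∧ Matrix.trace (X ξ) = 0) ∧
      ((Y ξ).IsHermitian ∧ Matrix.trace (Y ξ) = 0) ∧
      ((Z ξ).IsHermitian ∧ Matrix.trace (Z ξ) = 0)) := by
  have hVH : V.IsHermitian := by
    rw [hV]
    unfold Matrix.IsHermitian
    rw [Matrix.conjTranspose_sum]
    exact Finset.sum_congr rfl fun j _ => Matrix.isHermitian_conjTranspose_mul_self (v j)
  have hYZ : ∀ ξ : Matrix (Fin n) (Fin n) ℂ, Y ξ + Z ξ = -jordanProd V ξ + K ξ := by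
    intro ξ
    rw [hY, hZ]; abel
  -- trace of K ξ equals trace of V * ξ
  have htrK : ∀ ξ : Matrix (Fin n) (Fin n) ℂ, (K ξ).trace = (V * ξ).trace := by
    intro ξ
    rw [hK, hV, Matrix.trace_sum, Finset.sum_mul, Matrix.trace_sum]
    refine Finset.sum_congr rfl fun j _ => ?_
    exact Matrix.trace_mul_cycle (v j) ξ ((v j)ᴴ)
  -- trace(V * ξ) is fixed by star when ξ Hermitian
  have htrVr : ∀ ξ : Matrix (Fin n) (Fin n) ℂ, ξ.IsHermitian →
      star ((V * ξ).trace) = (V * ξ).trace := by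
    intro ξ hξ
    have : star ((V * ξ).trace) = ((V * ξ)ᴴ).trace := (Matrix.trace_conjTranspose _).symm
    rw [this, Matrix.conjTranspose_mul, hξ.eq, hVH.eq, Matrix.trace_mul_comm]
  refine ⟨fun ξ => ?_, hYZ, fun ξ hξ htr => ?_⟩
  · rw [hL, hX, add_assoc, hYZ ξ, jordanProd]
    abel
  · refine ⟨⟨?_, ?_⟩, ⟨?_, ?_⟩, ⟨?_, ?_⟩⟩
    · rw [hX]
      unfold Matrix.IsHermitian
      rw [Matrix.conjTranspose_smul, Matrix.conjTranspose_sub, Matrix.conjTranspose_mul,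
        Matrix.conjTranspose_mul, hξ.eq, hH.eq]
      simp [smul_sub]
      abel
    · rw [hX]
      rw [Matrix.trace_smul, Matrix.trace_sub, Matrix.trace_mul_comm]
      simp
    · rw [hY]
      unfold Matrix.IsHermitian
      rw [Matrix.conjTranspose_add, Matrix.conjTranspose_neg, jordanProd,
        Matrix.conjTranspose_smul, Matrix.conjTranspose_add, Matrix.conjTranspose_mul,
        Matrix.conjTranspose_mul, Matrix.conjTranspose_smul, hξ.eq, hVH.eq,
        htrVr ξ hξ]
      simp [add_comm]
    · rw [hY]
      rw [Matrix.trace_add, Matrix.trace_neg, jordanProd, Matrix.trace_smul,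
        Matrix.trace_add, Matrix.trace_smul, htr, Matrix.trace_mul_comm ξ V]
      simp [smul_eq_mul]
      ring
    · rw [hZ]
      unfold Matrix.IsHermitian
      rw [Matrix.conjTranspose_sub, Matrix.conjTranspose_smul, hξ.eq, htrVr ξ hξ, hK]
      congr 1
      rw [Matrix.conjTranspose_sum]
      refine Finset.sum_congr rfl fun j _ => ?_
      rw [Matrix.conjTranspose_mul, Matrix.conjTranspose_mul, hξ.eq,
        Matrix.conjTranspose_conjTranspose, mul_assoc]
    · rw [hZ, Matrix.trace_sub, Matrix.trace_smul, htr, htrK]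
      simp
end

section
/- Let W be the real vector space of n×n Hermitian complex matrices and let ξ ∈ W satisfy Tr(ξ) = 1. Let f, g : W → ℝ be functions differentiable at ξ, and suppose f vanishes on the whole affine hyperplane {η ∈ W : Tr(η) = 1}. Let F, G ∈ W represent the derivatives at ξ, i.e. Df(ξ)(η) = Tr(Fη) and Dg(ξ)(η) = Tr(Gη) for all η ∈ W. Then Tr(ξ·(F⊙G)) − Tr(Fξ)·Tr(Gξ) = 0. (This is the statement that the ideal of functions vanishing on the trace-one hyperplane is an ideal for the symmetric product associated with the modified tensor R̃ = G − Δ̃⊗Δ̃, so the symmetric product reduces to the hyperplane.) -/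
open Matrix

attribute [local instance] Matrix.frobeniusNormedAddCommGroup Matrix.frobeniusNormedSpace

lemma trace_herm_real {n : ℕ} {A B : Matrix (Fin n) (Fin n) ℂ}
    (hA : A.IsHermitian) (hB : B.IsHermitian) :
    starRingEnd ℂ (Matrix.trace (A * B)) = Matrix.trace (A * B) := by
  have : ((A * B)ᴴ).trace = star (A * B).trace := Matrix.trace_conjTranspose _
  rw [Matrix.conjTranspose_mul, hA.eq, hB.eq, Matrix.trace_mul_comm] at this
  simpa using this.symm

/-- On the real vector space of Hermitian matrices, if `f` vanishes on the affine
hyperplane of trace-one Hermitian matrices, `ξ` is a trace-one Hermitian point, and the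
derivatives of `f` and `g` at `ξ` are represented via the trace pairing by Hermitian
matrices `F` and `G`, then `Tr(ξ·(F⊙G)) − Tr(Fξ)·Tr(Gξ) = 0`: the ideal of functions
vanishing on the trace-one hyperplane is an ideal for the symmetric product associated
with the modified tensor `R̃ = G − Δ̃⊗Δ̃`, so the symmetric product reduces to the
hyperplane. -/
theorem symmetric_product_reduces {n : ℕ}
    (ξ : Matrix (Fin n) (Fin n) ℂ) (hξ : ξ.IsHermitian) (hξtr : ξ.trace = 1)
    (f g : Matrix (Fin n) (Fin n) ℂ → ℝ)
    (hf : DifferentiableAt ℝ f ξ) (hg : DifferentiableAt ℝ g ξ)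
    (hfvan : ∀ η : Matrix (Fin n) (Fin n) ℂ, η.IsHermitian → η.trace = 1 → f η = 0)
    (F G : Matrix (Fin n) (Fin n) ℂ) (hF : F.IsHermitian) (hG : G.IsHermitian)
    (hdf : ∀ η : Matrix (Fin n) (Fin n) ℂ, η.IsHermitian →
      fderiv ℝ f ξ η = (Matrix.trace (F * η)).re)
    (hdg : ∀ η : Matrix (Fin n) (Fin n) ℂ, η.IsHermitian →
      fderiv ℝ g ξ η = (Matrix.trace (G * η)).re) :
    Matrix.trace (ξ * jordanProd F G) - Matrix.trace (F * ξ) * Matrix.trace (G * ξ) = 0 := by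
  -- derivative of f vanishes on traceless Hermitian directions
  have key : ∀ η : Matrix (Fin n) (Fin n) ℂ, η.IsHermitian → η.trace = 0 →
      fderiv ℝ f ξ η = 0 := by
    intro η hη hηtr
    have hφ : HasDerivAt (fun t : ℝ => ξ + t • η) η 0 := by
      have h := ((hasDerivAt_id (0 : ℝ)).smul_const η).const_add ξ
      simp only [id, one_smul] at h
      exact h
    have hfd : HasFDerivAt f (fderiv ℝ f ξ) (ξ + (0 : ℝ) • η) := by
      simpa using hf.hasFDerivAt
    have hcomp : HasDerivAt (fun t : ℝ => f (ξ + t • η)) (fderiv ℝ f ξ η) 0 := by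
      have := hfd.comp_hasDerivAt 0 hφ
      exact this
    have hzero : (fun t : ℝ => f (ξ + t • η)) = fun _ => (0 : ℝ) := by
      funext t
      apply hfvan
      · unfold Matrix.IsHermitian
        ext i j
        simp [Matrix.conjTranspose_apply, hξ.apply, hη.apply, Complex.real_smul]
      · simp [Matrix.trace_add, Matrix.trace_smul, hξtr, hηtr]
    rw [hzero] at hcomp
    exact hcomp.unique (hasDerivAt_const 0 0)
  set c : ℂ := Matrix.trace (G * ξ) with hc
  have hcreal : starRingEnd ℂ c = c := trace_herm_real hG hξ
  set η₀ : Matrix (Fin n) (Fin n) ℂ :=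
    (1 / 2 : ℂ) • (ξ * G + G * ξ) - c • ξ with hη₀
  have hη₀herm : η₀.IsHermitian := by
    unfold Matrix.IsHermitian
    rw [hη₀, Matrix.conjTranspose_sub, Matrix.conjTranspose_smul, Matrix.conjTranspose_smul,
      Matrix.conjTranspose_add, Matrix.conjTranspose_mul, Matrix.conjTranspose_mul,
      hξ.eq, hG.eq]
    rw [show star c = c from hcreal, show star (1 / 2 : ℂ) = 1 / 2 by simp,
      add_comm (G * ξ) (ξ * G)]
  have hη₀tr : η₀.trace = 0 := by
    rw [hη₀]
    simp [Matrix.trace_sub, Matrix.trace_smul, Matrix.trace_add, Matrix.trace_mul_comm ξ G,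
      hξtr, ← hc]
    ring
  have h1 : (Matrix.trace (F * η₀)).re = 0 := by
    have := hdf η₀ hη₀herm
    rw [key η₀ hη₀herm hη₀tr] at this
    exact this.symm
  have h2 : Matrix.trace (F * η₀) = 0 := by
    have hr := trace_herm_real hF hη₀herm
    have him : (Matrix.trace (F * η₀)).im = 0 := by
      have := congrArg Complex.im hr
      simp [Complex.conj_im] at this
      linarith
    exact Complex.ext h1 him
  -- now expand
  have expand : Matrix.trace (F * η₀) =
      Matrix.trace (ξ * jordanProd F G) - Matrix.trace (F * ξ) * Matrix.trace (G * ξ) := by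
    rw [hη₀, jordanProd]
    simp only [Matrix.mul_sub, Matrix.mul_add, Matrix.mul_smul, Matrix.trace_sub,
      Matrix.trace_add, Matrix.trace_smul, ← Matrix.mul_assoc]
    rw [← Matrix.trace_mul_cycle ξ G F, Matrix.trace_mul_cycle F G ξ, ← hc]
    simp only [smul_eq_mul]
    ring
  rw [← expand, h2]
end

section
/- Let U be an n×n unitary complex matrix and ρ an n×n Hermitian complex matrix. Then Tr(UρUᴴρ) is a real number satisfying Tr(UρUᴴρ) ≤ Tr(ρ²), with equality if and only if UρUᴴ = ρ. Consequently, for the quantum Poisson semigroup generator L(ρ) := UρUᴴ − ρ, the Lie derivative of the purity F(ρ) = Tr(ρ²)/2 along the GKLS vector field satisfies Tr(L(ρ)·ρ) ≤ 0, i.e. the purity is a LaSalle function for quantum Poisson semigroups, and it is stationary exactly at the matrices commuting with U. -/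
open Matrix
open scoped ComplexOrder

lemma trace_hsq_eq {n : ℕ} (M : Matrix (Fin n) (Fin n) ℂ) :
    Matrix.trace (Mᴴ * M) = ((∑ i, ∑ j, Complex.normSq (M j i) : ℝ) : ℂ) := by
  rw [Matrix.trace]
  push_cast
  refine Finset.sum_congr rfl fun i _ => ?_
  simp only [Matrix.diag_apply, Matrix.mul_apply, Matrix.conjTranspose_apply]
  exact Finset.sum_congr rfl fun j _ => (Complex.normSq_eq_conj_mul_self).symm

lemma trace_hsq_nonneg {n : ℕ} (M : Matrix (Fin n) (Fin n) ℂ) :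
    0 ≤ Matrix.trace (Mᴴ * M) := by
  rw [trace_hsq_eq, Complex.zero_le_real]
  exact Finset.sum_nonneg fun i _ => Finset.sum_nonneg fun j _ => Complex.normSq_nonneg _

lemma trace_hsq_eq_zero_iff {n : ℕ} (M : Matrix (Fin n) (Fin n) ℂ) :
    Matrix.trace (Mᴴ * M) = 0 ↔ M = 0 := by
  rw [trace_hsq_eq]
  norm_cast
  rw [Finset.sum_eq_zero_iff_of_nonneg
    (fun i _ => Finset.sum_nonneg fun j _ => Complex.normSq_nonneg _)]
  constructor
  · intro h
    ext i j
    have := (Finset.sum_eq_zero_iff_of_nonneg (fun k _ => Complex.normSq_nonneg _)).mp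
      (h j (Finset.mem_univ _)) i (Finset.mem_univ _)
    simpa using Complex.normSq_eq_zero.mp this
  · rintro rfl; simp

/-- For `U` unitary and `ρ` Hermitian, `Tr(UρUᴴρ)` is a real number with
`Tr(UρUᴴρ) ≤ Tr(ρ²)`, with equality iff `UρUᴴ = ρ`.  Consequently, for the quantum
Poisson semigroup generator `L(ρ) = UρUᴴ − ρ`, the Lie derivative of the purity
`F(ρ) = Tr(ρ²)/2` along the GKLS vector field satisfies `Tr(L(ρ)·ρ) ≤ 0`: the purity
is a LaSalle function for quantum Poisson semigroups, stationary exactly at the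
matrices commuting with `U`. -/
theorem purity_lasalle_quantum_poisson {n : ℕ}
    (U ρ : Matrix (Fin n) (Fin n) ℂ) (hU : Uᴴ * U = 1) (hρ : ρ.IsHermitian) :
    (Matrix.trace (U * ρ * Uᴴ * ρ)).im = 0 ∧
    Matrix.trace (U * ρ * Uᴴ * ρ) ≤ Matrix.trace (ρ * ρ) ∧
    (Matrix.trace (U * ρ * Uᴴ * ρ) = Matrix.trace (ρ * ρ) ↔ U * ρ * Uᴴ = ρ) ∧
    Matrix.trace ((U * ρ * Uᴴ - ρ) * ρ) ≤ 0 ∧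
    (Matrix.trace ((U * ρ * Uᴴ - ρ) * ρ) = 0 ↔ U * ρ = ρ * U) := by
  have hUU : U * Uᴴ = 1 := mul_eq_one_comm.mp hU
  set A := U * ρ * Uᴴ with hA
  have hAH : Aᴴ = A := by
    simp [hA, Matrix.conjTranspose_mul, hρ.eq, Matrix.mul_assoc]
  set M := A - ρ with hMdef
  have hMH : Mᴴ = M := by simp [hMdef, hAH, hρ.eq]
  -- trace(A*A) = trace(ρ*ρ)
  have hAA : Matrix.trace (A * A) = Matrix.trace (ρ * ρ) := by
    have h1 : A * A = U * (ρ * ρ) * Uᴴ := by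
      have : A * A = U * ρ * (Uᴴ * U) * ρ * Uᴴ := by
        simp only [hA]; noncomm_ring
      rw [this, hU]; noncomm_ring
    rw [h1, Matrix.trace_mul_cycle, ← Matrix.mul_assoc, hU, Matrix.one_mul]
  have hcomm : Matrix.trace (ρ * A) = Matrix.trace (A * ρ) := Matrix.trace_mul_comm _ _
  -- trace(MᴴM) = 2 * (trace(ρρ) - trace(Aρ))
  have htr : Matrix.trace (Mᴴ * M) =
      2 * (Matrix.trace (ρ * ρ) - Matrix.trace (A * ρ)) := by
    rw [hMH]
    have hexp : M * M = A * A - A * ρ - ρ * A + ρ * ρ := by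
      simp only [hMdef]; noncomm_ring
    rw [hexp, Matrix.trace_add, Matrix.trace_sub, Matrix.trace_sub, hAA, hcomm]
    ring
  have h0 : 0 ≤ Matrix.trace (Mᴴ * M) := trace_hsq_nonneg M
  have hd : (0:ℂ) ≤ Matrix.trace (ρ * ρ) - Matrix.trace (A * ρ) := by
    rw [htr] at h0
    rw [Complex.le_def] at h0 ⊢
    simp only [Complex.zero_re, Complex.zero_im, Complex.sub_re, Complex.sub_im, Complex.mul_re, Complex.mul_im] at h0 ⊢
    norm_num at h0
    exact ⟨by linarith [h0.1], by linarith [h0.2]⟩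
  -- imaginary part is zero
  have him : (Matrix.trace (A * ρ)).im = 0 := by
    have h1 : star (Matrix.trace (A * ρ)) = Matrix.trace (A * ρ) := by
      rw [← Matrix.trace_conjTranspose, Matrix.conjTranspose_mul, hρ.eq, hAH, hcomm]
    have := congrArg Complex.im h1
    simp only [Complex.star_def, Complex.conj_im] at this
    linarith
  -- equality iff A = ρ
  have heq : Matrix.trace (A * ρ) = Matrix.trace (ρ * ρ) ↔ A = ρ := by
    constructor
    · intro h
      have hz : Matrix.trace (Mᴴ * M) = 0 := by rw [htr, h]; ring
      have := (trace_hsq_eq_zero_iff M).mp hz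
      rw [hMdef, sub_eq_zero] at this; exact this
    · intro h; rw [h]
  -- commutation iff
  have hcom : A = ρ ↔ U * ρ = ρ * U := by
    constructor
    · intro h
      have := congrArg (· * U) h
      simpa [hA, Matrix.mul_assoc, hU] using this
    · intro h
      rw [hA, h, Matrix.mul_assoc, hUU, Matrix.mul_one]
  refine ⟨him, sub_nonneg.mp hd, heq.trans (by rfl), ?_, ?_⟩
  · rw [Matrix.sub_mul, Matrix.trace_sub]
    exact sub_nonpos.mpr (sub_nonneg.mp hd)
  · rw [Matrix.sub_mul, Matrix.trace_sub, sub_eq_zero]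
    exact heq.trans hcom
end

section
/- Let H be an n×n Hermitian complex matrix, let U_1, …, U_N be n×n unitary complex matrices, and let c_1, …, c_N ≥ 0 be nonnegative reals. Define L(ρ) := −i(Hρ − ρH) + Σ_{j=1}^{N} c_j (U_j ρ U_jᴴ − ρ). Then for every n×n Hermitian matrix ρ one has Tr(L(ρ)·ρ) ≤ 0, with equality if and only if U_j ρ U_jᴴ = ρ for every j with c_j > 0. In particular the purity F(ρ) = Tr(ρ²)/2 is a LaSalle function for positive linear combinations of quantum Poisson semigroups with a Hamiltonian term, and the Hamiltonian term contributes zero to the derivative of the purity. -/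
open Matrix
open scoped ComplexOrder

private lemma trace_ctm_eq {n : ℕ} (M : Matrix (Fin n) (Fin n) ℂ) :
    Matrix.trace (Mᴴ * M) = ((∑ i, ∑ k, Complex.normSq (M k i) : ℝ) : ℂ) := by
  simp only [Matrix.trace, Matrix.diag, Matrix.mul_apply, Matrix.conjTranspose_apply,
    Complex.normSq_eq_conj_mul_self]
  push_cast
  simp [Complex.normSq_eq_conj_mul_self]

private lemma trace_ctm_nonneg {n : ℕ} (M : Matrix (Fin n) (Fin n) ℂ) :
    (0 : ℝ) ≤ ∑ i, ∑ k, Complex.normSq (M k i) :=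
  Finset.sum_nonneg fun _ _ => Finset.sum_nonneg fun _ _ => Complex.normSq_nonneg _

private lemma trace_ctm_zero_iff {n : ℕ} (M : Matrix (Fin n) (Fin n) ℂ) :
    (∑ i, ∑ k, Complex.normSq (M k i)) = 0 ↔ M = 0 := by
  rw [Finset.sum_eq_zero_iff_of_nonneg
    (fun _ _ => Finset.sum_nonneg fun _ _ => Complex.normSq_nonneg _)]
  constructor
  · intro h
    ext k i
    have := (Finset.sum_eq_zero_iff_of_nonneg
      (fun _ _ => Complex.normSq_nonneg _)).1 (h i (Finset.mem_univ i)) k (Finset.mem_univ k)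
    simpa [Complex.normSq_eq_zero] using this
  · intro h i _
    subst h; simp

/-- For the GKLS generator `L(ρ) = −i(Hρ − ρH) + Σ_j c_j (U_j ρ U_jᴴ − ρ)` of a
positive linear combination of quantum Poisson semigroups with a Hamiltonian term
(`H` Hermitian, `U_j` unitary, `c_j ≥ 0`), one has `Tr(L(ρ)·ρ) ≤ 0` for every
Hermitian `ρ`, with equality iff `U_j ρ U_jᴴ = ρ` for every `j` with `c_j > 0`.
In particular the purity `F(ρ) = Tr(ρ²)/2` is a LaSalle function, and the Hamiltonian
term contributes zero to the derivative of the purity. -/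
theorem purity_lasalle_poisson_combination {n N : ℕ}
    (H : Matrix (Fin n) (Fin n) ℂ) (hH : H.IsHermitian)
    (U : Fin N → Matrix (Fin n) (Fin n) ℂ) (hU : ∀ j, (U j)ᴴ * U j = 1)
    (c : Fin N → ℝ) (hc : ∀ j, 0 ≤ c j)
    (L : Matrix (Fin n) (Fin n) ℂ → Matrix (Fin n) (Fin n) ℂ)
    (hL : ∀ ρ, L ρ = -Complex.I • (H * ρ - ρ * H)
        + ∑ j, (c j : ℂ) • (U j * ρ * (U j)ᴴ - ρ)) :
    ∀ ρ : Matrix (Fin n) (Fin n) ℂ, ρ.IsHermitian →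
      Matrix.trace (L ρ * ρ) ≤ 0 ∧
      (Matrix.trace (L ρ * ρ) = 0 ↔ ∀ j, 0 < c j → U j * ρ * (U j)ᴴ = ρ) ∧
      Matrix.trace ((-Complex.I • (H * ρ - ρ * H)) * ρ) = 0 := by
  intro ρ hρ
  set M : Fin N → Matrix (Fin n) (Fin n) ℂ := fun j => U j * ρ * (U j)ᴴ - ρ with hM
  -- Hamiltonian part has zero trace
  have hham : Matrix.trace ((-Complex.I • (H * ρ - ρ * H)) * ρ) = 0 := by
    rw [Matrix.smul_mul, Matrix.trace_smul, Matrix.sub_mul, Matrix.trace_sub,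
      Matrix.trace_mul_cycle H ρ ρ]
    simp
  -- each M j is Hermitian
  have hMHerm : ∀ j, (M j)ᴴ = M j := by
    intro j
    simp [hM, Matrix.conjTranspose_sub, Matrix.conjTranspose_mul, hρ.eq, Matrix.mul_assoc]
  -- trace (M j * ρ) = -(1/2) * trace ((M j)ᴴ * M j)
  have key : ∀ j, Matrix.trace (M j * ρ) = -(1/2 : ℂ) * Matrix.trace ((M j)ᴴ * M j) := by
    intro j
    rw [hMHerm j]
    have e1 : Matrix.trace (U j * ρ * (U j)ᴴ * (U j * ρ * (U j)ᴴ)) = Matrix.trace (ρ * ρ) := by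
      have : U j * ρ * (U j)ᴴ * (U j * ρ * (U j)ᴴ) = U j * (ρ * ρ) * (U j)ᴴ := by
        simp only [Matrix.mul_assoc]
        rw [← Matrix.mul_assoc ((U j)ᴴ) (U j), hU j, Matrix.one_mul]
      rw [this, Matrix.trace_mul_cycle, ← Matrix.mul_assoc, hU j, Matrix.one_mul]
    have e2 : Matrix.trace (ρ * (U j * ρ * (U j)ᴴ)) =
        Matrix.trace (U j * ρ * (U j)ᴴ * ρ) := Matrix.trace_mul_comm _ _
    simp only [hM, Matrix.sub_mul, Matrix.mul_sub, Matrix.trace_sub]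
    rw [e1, e2]
    ring
  -- total trace
  have htot : Matrix.trace (L ρ * ρ)
      = ∑ j, (c j : ℂ) * (-(1/2 : ℂ) * Matrix.trace ((M j)ᴴ * M j)) := by
    rw [hL, Matrix.add_mul, Matrix.trace_add, hham, zero_add, Matrix.sum_mul,
      Matrix.trace_sum]
    refine Finset.sum_congr rfl fun j _ => ?_
    rw [Matrix.smul_mul, Matrix.trace_smul, smul_eq_mul, key j]
  -- rewrite using real sums
  have htot' : Matrix.trace (L ρ * ρ)
      = ((-(1/2 : ℝ) * ∑ j, c j * ∑ i, ∑ k, Complex.normSq (M j k i) : ℝ) : ℂ) := by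
    rw [htot]
    push_cast
    rw [Finset.mul_sum]
    refine Finset.sum_congr rfl fun j _ => ?_
    rw [trace_ctm_eq]
    push_cast
    ring
  set S : ℝ := ∑ j, c j * ∑ i, ∑ k, Complex.normSq (M j k i) with hS
  have hSnonneg : 0 ≤ S :=
    Finset.sum_nonneg fun j _ => mul_nonneg (hc j) (trace_ctm_nonneg _)
  refine ⟨?_, ?_, hham⟩
  · rw [htot']
    have : (-(1/2 : ℝ)) * S ≤ 0 := by nlinarith
    exact_mod_cast this
  · rw [htot']
    have hcast : (((-(1/2 : ℝ)) * S : ℝ) : ℂ) = 0 ↔ ((-(1/2 : ℝ)) * S : ℝ) = 0 := by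
      exact_mod_cast Iff.rfl
    rw [hcast]
    constructor
    · intro h j hcj
      have hS0 : S = 0 := by linarith
      have := (Finset.sum_eq_zero_iff_of_nonneg
        (fun j _ => mul_nonneg (hc j) (trace_ctm_nonneg (M j)))).1 hS0 j (Finset.mem_univ j)
      have hsum0 : (∑ i, ∑ k, Complex.normSq (M j k i)) = 0 := by
        rcases mul_eq_zero.1 this with h' | h'
        · exact absurd h' (ne_of_gt hcj)
        · exact h'
      have hMj : U j * ρ * (U j)ᴴ - ρ = 0 := (trace_ctm_zero_iff _).1 hsum0
      exact sub_eq_zero.1 hMj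
    · intro h
      have hS0 : S = 0 := by
        refine Finset.sum_eq_zero fun j _ => ?_
        rcases lt_or_eq_of_le (hc j) with hcj | hcj
        · have hMj : M j = 0 := by
            show U j * ρ * (U j)ᴴ - ρ = 0
            rw [h j hcj, sub_self]
          rw [(trace_ctm_zero_iff (M j)).2 hMj, mul_zero]
        · rw [← hcj, zero_mul]
      rw [hS0, mul_zero]
end

section
/- Let v and ρ be n×n Hermitian complex matrices. Then Tr(vρvρ) is a real number satisfying Tr(vρvρ) ≤ Tr(v²ρ²). Consequently, for the quantum Gaussian semigroup generator L(ρ) := −v²⊙ρ + vρv (with v²⊙ρ = (v²ρ + ρv²)/2), one has Tr(L(ρ)·ρ) ≤ 0 for every Hermitian ρ, i.e. the purity F(ρ) = Tr(ρ²)/2 is a LaSalle function for quantum Gaussian semigroups. -/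
open Matrix
open scoped ComplexOrder

/-- For Hermitian `v` and `ρ`, `Tr(vρvρ)` is a real number with
`Tr(vρvρ) ≤ Tr(v²ρ²)`.  Consequently, for the quantum Gaussian semigroup generator
`L(ρ) = −v²⊙ρ + vρv`, one has `Tr(L(ρ)·ρ) ≤ 0` for every Hermitian `ρ`: the purity
`F(ρ) = Tr(ρ²)/2` is a LaSalle function for quantum Gaussian semigroups. -/
theorem purity_lasalle_quantum_gaussian {n : ℕ}
    (v ρ : Matrix (Fin n) (Fin n) ℂ) (hv : v.IsHermitian) (hρ : ρ.IsHermitian) :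
    (Matrix.trace (v * ρ * v * ρ)).im = 0 ∧
    Matrix.trace (v * ρ * v * ρ) ≤ Matrix.trace (v * v * (ρ * ρ)) ∧
    Matrix.trace ((-jordanProd (v * v) ρ + v * ρ * v) * ρ) ≤ 0 := by
  set t1 := Matrix.trace (v * ρ * v * ρ) with ht1
  set t2 := Matrix.trace (v * v * (ρ * ρ)) with ht2
  -- t2 is real
  have ht2im : t2.im = 0 := by
    have hs : star t2 = t2 := by
      rw [ht2, ← Matrix.trace_conjTranspose]
      simp only [conjTranspose_mul, hv.eq, hρ.eq]
      rw [Matrix.trace_mul_comm]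
    exact Complex.conj_eq_iff_im.mp hs
  -- cyclic trace identities
  have c1 : Matrix.trace (ρ * (v * (v * ρ))) = t2 := by
    rw [Matrix.trace_mul_comm, ht2]
    rw [show v * (v * ρ) * ρ = v * v * (ρ * ρ) by noncomm_ring]
  have c2 : Matrix.trace (ρ * (v * (ρ * v))) = t1 := by
    rw [Matrix.trace_mul_comm, ht1]
    rw [show v * (ρ * v) * ρ = v * ρ * v * ρ by noncomm_ring]
  have c3 : Matrix.trace (v * (ρ * (v * ρ))) = t1 := by
    rw [ht1]; rw [show v * (ρ * (v * ρ)) = v * ρ * v * ρ by noncomm_ring]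
  have c4 : Matrix.trace (v * (ρ * (ρ * v))) = t2 := by
    rw [show v * (ρ * (ρ * v)) = v * (ρ * ρ * v) by noncomm_ring,
      Matrix.trace_mul_comm, ht2]
    rw [show ρ * ρ * v * v = ρ * ρ * (v * v) by noncomm_ring, Matrix.trace_mul_comm]
  -- positivity of Tr(CᴴC) with C = vρ - ρv
  have hpos : (0:ℂ) ≤ ((v * ρ - ρ * v)ᴴ * (v * ρ - ρ * v)).trace := by
    rw [Matrix.trace]
    refine Finset.sum_nonneg fun i _ => ?_
    rw [Matrix.diag_apply, Matrix.mul_apply]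
    exact Finset.sum_nonneg fun j _ => star_mul_self_nonneg _
  have heq : ((v * ρ - ρ * v)ᴴ * (v * ρ - ρ * v)).trace = 2 * t2 - 2 * t1 := by
    rw [conjTranspose_sub, conjTranspose_mul, conjTranspose_mul, hv.eq, hρ.eq]
    rw [show (ρ * v - v * ρ) * (v * ρ - ρ * v)
        = ρ * (v * (v * ρ)) - ρ * (v * (ρ * v)) - v * (ρ * (v * ρ)) + v * (ρ * (ρ * v))
        by noncomm_ring]
    rw [Matrix.trace_add, Matrix.trace_sub, Matrix.trace_sub, c1, c2, c3, c4]
    ring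
  rw [heq] at hpos
  have hle : t1 ≤ t2 := by
    have h3 : (0:ℂ) ≤ (1/2) * (2 * t2 - 2 * t1) := mul_nonneg (by rw [Complex.le_def]; norm_num) hpos
    rw [show (1/2:ℂ) * (2 * t2 - 2 * t1) = t2 - t1 by ring] at h3
    exact sub_nonneg.mp h3
  have ht1im : t1.im = 0 := by
    rw [Complex.le_def] at hle
    rw [hle.2, ht2im]
  refine ⟨ht1im, hle, ?_⟩
  have hexp : Matrix.trace ((-jordanProd (v * v) ρ + v * ρ * v) * ρ) = t1 - t2 := by
    simp only [jordanProd, Matrix.add_mul, Matrix.neg_mul, Matrix.smul_mul,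
      Matrix.trace_add, Matrix.trace_neg, Matrix.trace_smul, smul_eq_mul]
    rw [show v * v * ρ * ρ = v * v * (ρ * ρ) by noncomm_ring,
      show ρ * (v * v) * ρ = ρ * (v * (v * ρ)) by noncomm_ring, c1, ← ht1, ← ht2]
    ring
  rw [hexp]
  exact sub_nonpos.mpr hle
end

section
/- Let H be an n×n Hermitian complex matrix, let v_1, …, v_N be n×n Hermitian complex matrices, let c_1, …, c_N ≥ 0 be nonnegative reals, set V := Σ_j c_j v_j², and define L(ρ) := −i(Hρ − ρH) − (1/2)(Vρ + ρV) + Σ_j c_j v_j ρ v_j. Then for every n×n Hermitian matrix ρ one has Tr(L(ρ)·ρ) ≤ 0. In particular the purity F(ρ) = Tr(ρ²)/2 is a LaSalle function for positive linear combinations of quantum Gaussian semigroups with a Hamiltonian term. -/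
open Matrix
open scoped ComplexOrder

/-- For the GKLS generator `L(ρ) = −i(Hρ − ρH) − (1/2)(Vρ + ρV) + Σ_j c_j v_j ρ v_j`
of a positive linear combination of quantum Gaussian semigroups with a Hamiltonian term
(`H`, `v_j` Hermitian, `c_j ≥ 0`, `V = Σ_j c_j v_j²`), one has `Tr(L(ρ)·ρ) ≤ 0` for
every Hermitian `ρ`: the purity `F(ρ) = Tr(ρ²)/2` is a LaSalle function. -/
theorem purity_lasalle_gaussian_combination {n N : ℕ}
    (H : Matrix (Fin n) (Fin n) ℂ) (hH : H.IsHermitian)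
    (v : Fin N → Matrix (Fin n) (Fin n) ℂ) (hv : ∀ j, (v j).IsHermitian)
    (c : Fin N → ℝ) (hc : ∀ j, 0 ≤ c j)
    (V : Matrix (Fin n) (Fin n) ℂ) (hV : V = ∑ j, (c j : ℂ) • (v j * v j))
    (L : Matrix (Fin n) (Fin n) ℂ → Matrix (Fin n) (Fin n) ℂ)
    (hL : ∀ ρ, L ρ = -Complex.I • (H * ρ - ρ * H) - (1 / 2 : ℂ) • (V * ρ + ρ * V)
        + ∑ j, (c j : ℂ) • (v j * ρ * v j)) :
    ∀ ρ : Matrix (Fin n) (Fin n) ℂ, ρ.IsHermitian →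
      Matrix.trace (L ρ * ρ) ≤ 0 := by
  intro ρ hρ
  have t0 : Matrix.trace (L ρ * ρ)
      = -Complex.I * (Matrix.trace (H * ρ * ρ) - Matrix.trace (ρ * H * ρ))
        - (1/2 : ℂ) * (Matrix.trace (V * ρ * ρ) + Matrix.trace (ρ * V * ρ))
        + ∑ j, (c j : ℂ) * Matrix.trace (v j * ρ * v j * ρ) := by
    rw [hL]
    simp only [add_mul, sub_mul, smul_mul_assoc, Finset.sum_mul, Matrix.trace_smul,
      Matrix.trace_add, Matrix.trace_sub, Matrix.trace_sum, smul_eq_mul]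
  have hHam : Matrix.trace (ρ * H * ρ) = Matrix.trace (H * ρ * ρ) := by
    rw [show ρ * H * ρ = ρ * (H * ρ) from by noncomm_ring, Matrix.trace_mul_comm]
  have hVc : Matrix.trace (ρ * V * ρ) = Matrix.trace (V * ρ * ρ) := by
    rw [show ρ * V * ρ = ρ * (V * ρ) from by noncomm_ring, Matrix.trace_mul_comm]
  have hVtr : Matrix.trace (V * ρ * ρ) = ∑ j, (c j : ℂ) * Matrix.trace (v j * v j * ρ * ρ) := by
    rw [hV]
    simp only [Finset.sum_mul, smul_mul_assoc, Matrix.trace_sum, Matrix.trace_smul, smul_eq_mul]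
  have key : Matrix.trace (L ρ * ρ)
      = ∑ j, (c j : ℂ) * (Matrix.trace (v j * ρ * v j * ρ) - Matrix.trace (v j * v j * ρ * ρ)) := by
    rw [t0, hHam, hVc, hVtr]
    simp only [mul_sub]
    rw [Finset.sum_sub_distrib]
    ring
  have hAH : ∀ j, (v j * ρ - ρ * v j)ᴴ = ρ * v j - v j * ρ := by
    intro j
    simp [Matrix.conjTranspose_sub, Matrix.conjTranspose_mul, hρ.eq, (hv j).eq]
  have hterm : ∀ j, Matrix.trace (v j * ρ * v j * ρ) - Matrix.trace (v j * v j * ρ * ρ)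
      = -(1/2 : ℂ) * Matrix.trace ((v j * ρ - ρ * v j)ᴴ * (v j * ρ - ρ * v j)) := by
    intro j
    set a := v j with ha
    rw [hAH]
    have e3 : Matrix.trace (ρ * a * (a * ρ)) = Matrix.trace (a * a * ρ * ρ) := by
      rw [show ρ * a * (a * ρ) = ρ * (a * a * ρ) from by noncomm_ring, Matrix.trace_mul_comm,
        show a * a * ρ * ρ = a * a * ρ * ρ from rfl]
    have e4 : Matrix.trace (a * ρ * (ρ * a)) = Matrix.trace (a * a * ρ * ρ) := by
      rw [show a * ρ * (ρ * a) = (a * ρ * ρ) * a from by noncomm_ring, Matrix.trace_mul_comm,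
        show a * (a * ρ * ρ) = a * a * ρ * ρ from by noncomm_ring]
    have e5 : Matrix.trace (ρ * a * (ρ * a)) = Matrix.trace (a * ρ * v j * ρ) := by
      rw [show ρ * a * (ρ * a) = ρ * (a * ρ * a) from by noncomm_ring, Matrix.trace_mul_comm,
        ← ha, show a * ρ * a * ρ = a * ρ * a * ρ from rfl]
    rw [show (ρ * a - a * ρ) * (a * ρ - ρ * a)
        = ρ * a * (a * ρ) - ρ * a * (ρ * a) - a * ρ * (a * ρ) + a * ρ * (ρ * a) from by noncomm_ring]
    rw [Matrix.trace_add, Matrix.trace_sub, Matrix.trace_sub, e3, e4, e5, ← ha,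
      show a * ρ * (a * ρ) = a * ρ * a * ρ from by noncomm_ring]
    ring
  have tr_nonneg : ∀ j, (0:ℂ) ≤ Matrix.trace ((v j * ρ - ρ * v j)ᴴ * (v j * ρ - ρ * v j)) := by
    intro j
    rw [Matrix.trace]
    refine Finset.sum_nonneg fun i _ => ?_
    simp only [Matrix.diag_apply, Matrix.mul_apply, Matrix.conjTranspose_apply]
    exact Finset.sum_nonneg fun k _ => star_mul_self_nonneg _
  rw [key]
  refine Finset.sum_nonpos fun j _ => ?_
  rw [hterm j]
  have h1 : (0 : ℂ) ≤ (c j : ℂ) := by exact_mod_cast Complex.zero_le_real.mpr (hc j)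
  have h2 := tr_nonneg j
  have : -(1/2 : ℂ) * Matrix.trace ((v j * ρ - ρ * v j)ᴴ * (v j * ρ - ρ * v j)) ≤ 0 := by
    rw [neg_mul, neg_nonpos]
    have : (0:ℂ) ≤ (1/2 : ℂ) := by
      rw [Complex.le_def]
      norm_num
    exact mul_nonneg this h2
  exact mul_nonpos_of_nonneg_of_nonpos h1 this
end

section
/- Let H, e_1, …, e_M be n×n Hermitian complex matrices, let U_1, …, U_r be n×n unitary complex matrices, let α_1, …, α_M ≥ 0, β ≥ 0 and p_1, …, p_r ≥ 0 be nonnegative reals, set V := Σ_j α_j e_j² + β (Σ_k p_k)·I, and define the random unitary GKLS generator L(ρ) := −i(Hρ − ρH) − (1/2)(Vρ + ρV) + Σ_j α_j e_j ρ e_j + β Σ_k p_k U_k ρ U_kᴴ. Then for every n×n Hermitian matrix ρ one has Tr(L(ρ)·ρ) ≤ 0, i.e. the purity F(ρ) = Tr(ρ²)/2 is a LaSalle function for every quantum random unitary semigroup. -/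
open Matrix
open scoped ComplexOrder

lemma trace_sq_nonneg {n : ℕ} (A : Matrix (Fin n) (Fin n) ℂ) :
    0 ≤ Matrix.trace (Aᴴ * A) := by
  rw [Matrix.trace]
  apply Finset.sum_nonneg
  intro i _
  simp only [Matrix.diag, Matrix.mul_apply, Matrix.conjTranspose_apply]
  exact Finset.sum_nonneg fun k _ => star_mul_self_nonneg _

lemma gauss_term {n : ℕ} (a ρ : Matrix (Fin n) (Fin n) ℂ)
    (ha : a.IsHermitian) (hρ : ρ.IsHermitian) :
    Matrix.trace (a * ρ * a * ρ) - Matrix.trace (a * a * (ρ * ρ)) =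
      -(1/2 : ℂ) * Matrix.trace ((a * ρ - ρ * a)ᴴ * (a * ρ - ρ * a)) := by
  have h : (a * ρ - ρ * a)ᴴ = ρ * a - a * ρ := by
    simp [Matrix.conjTranspose_sub, Matrix.conjTranspose_mul, ha.eq, hρ.eq]
  rw [h]
  simp only [Matrix.sub_mul, Matrix.mul_sub, Matrix.trace_sub]
  have h1 : Matrix.trace (ρ * a * (a * ρ)) = Matrix.trace (a * a * (ρ * ρ)) := by
    rw [show ρ * a * (a * ρ) = ρ * (a * a * ρ) by noncomm_ring, Matrix.trace_mul_comm,
        show a * a * ρ * ρ = a * a * (ρ * ρ) by noncomm_ring]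
  have h2 : Matrix.trace (ρ * a * (ρ * a)) = Matrix.trace (a * ρ * a * ρ) := by
    rw [show ρ * a * (ρ * a) = ρ * (a * ρ * a) by noncomm_ring, Matrix.trace_mul_comm,
        show a * ρ * a * ρ = a * ρ * a * ρ from rfl]
  have h3 : Matrix.trace (a * ρ * (a * ρ)) = Matrix.trace (a * ρ * a * ρ) := by
    rw [show a * ρ * (a * ρ) = a * ρ * a * ρ by noncomm_ring]
  have h4 : Matrix.trace (a * ρ * (ρ * a)) = Matrix.trace (a * a * (ρ * ρ)) := by
    rw [show a * ρ * (ρ * a) = a * (ρ * ρ * a) by noncomm_ring, Matrix.trace_mul_comm,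
        show ρ * ρ * a * a = ρ * ρ * (a * a) by noncomm_ring, Matrix.trace_mul_comm]
  rw [h1, h2, h3, h4]; ring

lemma poisson_term {n : ℕ} (u ρ : Matrix (Fin n) (Fin n) ℂ)
    (hu : uᴴ * u = 1) (hρ : ρ.IsHermitian) :
    Matrix.trace (u * ρ * uᴴ * ρ) - Matrix.trace (ρ * ρ) =
      -(1/2 : ℂ) * Matrix.trace ((u * ρ - ρ * u)ᴴ * (u * ρ - ρ * u)) := by
  have hu' : u * uᴴ = 1 := by
    rw [mul_eq_one_comm] at hu; exact hu
  have h : (u * ρ - ρ * u)ᴴ = ρ * uᴴ - uᴴ * ρ := by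
    simp [Matrix.conjTranspose_sub, Matrix.conjTranspose_mul, hρ.eq]
  rw [h]
  simp only [Matrix.sub_mul, Matrix.mul_sub, Matrix.trace_sub]
  have h1 : Matrix.trace (ρ * uᴴ * (u * ρ)) = Matrix.trace (ρ * ρ) := by
    rw [show ρ * uᴴ * (u * ρ) = ρ * (uᴴ * u) * ρ by noncomm_ring, hu]; simp
  have h2 : Matrix.trace (ρ * uᴴ * (ρ * u)) = Matrix.trace (u * ρ * uᴴ * ρ) := by
    rw [show ρ * uᴴ * (ρ * u) = ρ * (uᴴ * ρ * u) by noncomm_ring, Matrix.trace_mul_comm,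
        show uᴴ * ρ * u * ρ = uᴴ * (ρ * u * ρ) by noncomm_ring, Matrix.trace_mul_comm,
        show ρ * u * ρ * uᴴ = ρ * (u * ρ * uᴴ) by noncomm_ring, Matrix.trace_mul_comm,
        show u * ρ * uᴴ * ρ = u * ρ * uᴴ * ρ from rfl]
  have h3 : Matrix.trace (uᴴ * ρ * (u * ρ)) = Matrix.trace (u * ρ * uᴴ * ρ) := by
    rw [show uᴴ * ρ * (u * ρ) = uᴴ * (ρ * u * ρ) by noncomm_ring, Matrix.trace_mul_comm,
        show ρ * u * ρ * uᴴ = ρ * (u * ρ * uᴴ) by noncomm_ring, Matrix.trace_mul_comm,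
        show u * ρ * uᴴ * ρ = u * ρ * uᴴ * ρ from rfl]
  have h4 : Matrix.trace (uᴴ * ρ * (ρ * u)) = Matrix.trace (ρ * ρ) := by
    rw [show uᴴ * ρ * (ρ * u) = uᴴ * (ρ * ρ * u) by noncomm_ring, Matrix.trace_mul_comm,
        show ρ * ρ * u * uᴴ = ρ * ρ * (u * uᴴ) by noncomm_ring, hu']; simp
  rw [h1, h2, h3, h4]; ring

/-- For the random unitary GKLS generator
`L(ρ) = −i(Hρ − ρH) − (1/2)(Vρ + ρV) + Σ_j α_j e_j ρ e_j + β Σ_k p_k U_k ρ U_kᴴ`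
(`H`, `e_j` Hermitian, `U_k` unitary, `α_j, β, p_k ≥ 0`,
`V = Σ_j α_j e_j² + β(Σ_k p_k)·I`), one has `Tr(L(ρ)·ρ) ≤ 0` for every Hermitian `ρ`:
the purity `F(ρ) = Tr(ρ²)/2` is a LaSalle function for every quantum random unitary
semigroup. -/
theorem purity_lasalle_random_unitary {n M r : ℕ}
    (H : Matrix (Fin n) (Fin n) ℂ) (hH : H.IsHermitian)
    (e : Fin M → Matrix (Fin n) (Fin n) ℂ) (he : ∀ j, (e j).IsHermitian)
    (U : Fin r → Matrix (Fin n) (Fin n) ℂ) (hU : ∀ k, (U k)ᴴ * U k = 1)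
    (α : Fin M → ℝ) (hα : ∀ j, 0 ≤ α j)
    (β : ℝ) (hβ : 0 ≤ β)
    (p : Fin r → ℝ) (hp : ∀ k, 0 ≤ p k)
    (V : Matrix (Fin n) (Fin n) ℂ)
    (hV : V = (∑ j, (α j : ℂ) • (e j * e j)) + ((β : ℂ) * (∑ k, (p k : ℂ))) • (1 : Matrix (Fin n) (Fin n) ℂ))
    (L : Matrix (Fin n) (Fin n) ℂ → Matrix (Fin n) (Fin n) ℂ)
    (hL : ∀ ρ, L ρ = -Complex.I • (H * ρ - ρ * H) - (1 / 2 : ℂ) • (V * ρ + ρ * V)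
        + ∑ j, (α j : ℂ) • (e j * ρ * e j)
        + (β : ℂ) • ∑ k, (p k : ℂ) • (U k * ρ * (U k)ᴴ)) :
    ∀ ρ : Matrix (Fin n) (Fin n) ℂ, ρ.IsHermitian →
      Matrix.trace (L ρ * ρ) ≤ 0 := by
  intro ρ hρ
  have cyc : ∀ A : Matrix (Fin n) (Fin n) ℂ,
      Matrix.trace (ρ * A * ρ) = Matrix.trace (A * (ρ * ρ)) := by
    intro A
    rw [show ρ * A * ρ = ρ * (A * ρ) by noncomm_ring, Matrix.trace_mul_comm,
        show A * ρ * ρ = A * (ρ * ρ) by noncomm_ring]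
  have key : Matrix.trace (L ρ * ρ) =
      (∑ j, (α j : ℂ) * (Matrix.trace (e j * ρ * e j * ρ)
          - Matrix.trace (e j * e j * (ρ * ρ))))
      + (β : ℂ) * ∑ k, (p k : ℂ) * (Matrix.trace (U k * ρ * (U k)ᴴ * ρ)
          - Matrix.trace (ρ * ρ)) := by
    rw [hL, hV]
    simp only [Matrix.add_mul, Matrix.sub_mul, Matrix.smul_mul, Finset.sum_mul,
      Matrix.trace_add, Matrix.trace_sub, Matrix.trace_smul, Matrix.trace_sum,
      smul_eq_mul, Matrix.one_mul, Matrix.mul_one, neg_smul, Matrix.trace_neg]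
    have hcomm : Matrix.trace (-(Complex.I • (H * ρ - ρ * H)) * ρ) = 0 := by
      rw [Matrix.neg_mul, Matrix.trace_neg, Matrix.smul_mul, Matrix.trace_smul,
        Matrix.sub_mul, Matrix.trace_sub, cyc H,
        show H * ρ * ρ = H * (ρ * ρ) by noncomm_ring]
      simp
    have hmid : Matrix.trace (ρ * ((∑ j, (α j : ℂ) • (e j * e j))
        + ((β : ℂ) * (∑ k, (p k : ℂ))) • (1 : Matrix (Fin n) (Fin n) ℂ)) * ρ)
        = (∑ j, (α j : ℂ) * Matrix.trace (e j * e j * (ρ * ρ)))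
          + ((β : ℂ) * (∑ k, (p k : ℂ))) * Matrix.trace (ρ * ρ) := by
      simp only [Matrix.mul_add, Matrix.add_mul, Matrix.mul_sum, Matrix.sum_mul,
        Matrix.mul_smul, Matrix.smul_mul, Matrix.mul_one, Matrix.trace_add,
        Matrix.trace_sum, Matrix.trace_smul, smul_eq_mul]
      congr 1
      exact Finset.sum_congr rfl fun j _ => by rw [cyc (e j * e j)]
    rw [hcomm, hmid]
    have hassoc : ∀ j, Matrix.trace (e j * e j * ρ * ρ)
        = Matrix.trace (e j * e j * (ρ * ρ)) := fun j => by
      rw [show e j * e j * ρ * ρ = e j * e j * (ρ * ρ) by noncomm_ring]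
    simp only [hassoc, mul_sub, Finset.sum_sub_distrib, Finset.mul_sum, Finset.sum_mul]
    rw [show (∑ x, (β : ℂ) * (p x : ℂ) * Matrix.trace (ρ * ρ)) = ∑ x, (β : ℂ) * Matrix.trace (ρ * ρ) * (p x : ℂ) from Finset.sum_congr rfl fun x _ => by ring]
    ring
  rw [key]
  have hterm1 : ∀ j ∈ Finset.univ, (α j : ℂ) * (Matrix.trace (e j * ρ * e j * ρ)
      - Matrix.trace (e j * e j * (ρ * ρ))) ≤ 0 := by
    intro j _
    have h := gauss_term (e j) ρ (he j) hρ
    rw [h]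
    have hT := trace_sq_nonneg (e j * ρ - ρ * e j)
    have hα' : (0 : ℂ) ≤ (α j : ℂ) := by
      rw [Complex.le_def]; simp [hα j]
    calc (α j : ℂ) * (-(1/2 : ℂ) * _) ≤ (α j : ℂ) * 0 := by
          apply mul_le_mul_of_nonneg_left _ hα'
          have : -(1/2 : ℂ) * Matrix.trace ((e j * ρ - ρ * e j)ᴴ * (e j * ρ - ρ * e j))
              ≤ -(1/2 : ℂ) * 0 := by
            apply mul_le_mul_of_nonpos_left hT
            rw [Complex.le_def]; norm_num
          simpa using this
      _ = 0 := mul_zero _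
  have hterm2 : ∀ k ∈ Finset.univ, (p k : ℂ) * (Matrix.trace (U k * ρ * (U k)ᴴ * ρ)
      - Matrix.trace (ρ * ρ)) ≤ 0 := by
    intro k _
    have h := poisson_term (U k) ρ (hU k) hρ
    rw [h]
    have hT := trace_sq_nonneg (U k * ρ - ρ * U k)
    have hp' : (0 : ℂ) ≤ (p k : ℂ) := by
      rw [Complex.le_def]; simp [hp k]
    calc (p k : ℂ) * (-(1/2 : ℂ) * _) ≤ (p k : ℂ) * 0 := by
          apply mul_le_mul_of_nonneg_left _ hp'
          have : -(1/2 : ℂ) * Matrix.trace ((U k * ρ - ρ * U k)ᴴ * (U k * ρ - ρ * U k))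
              ≤ -(1/2 : ℂ) * 0 := by
            apply mul_le_mul_of_nonpos_left hT
            rw [Complex.le_def]; norm_num
          simpa using this
      _ = 0 := mul_zero _
  have hβ' : (0 : ℂ) ≤ (β : ℂ) := by rw [Complex.le_def]; simp [hβ]
  have s1 : (∑ j, (α j : ℂ) * (Matrix.trace (e j * ρ * e j * ρ)
      - Matrix.trace (e j * e j * (ρ * ρ)))) ≤ 0 :=
    Finset.sum_nonpos hterm1
  have s2 : (∑ k, (p k : ℂ) * (Matrix.trace (U k * ρ * (U k)ᴴ * ρ)
      - Matrix.trace (ρ * ρ))) ≤ 0 :=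
    Finset.sum_nonpos hterm2
  have := mul_nonneg hβ' (neg_nonneg.mpr s2)
  calc _ ≤ (0 : ℂ) + (β : ℂ) * ∑ k, (p k : ℂ) * (Matrix.trace (U k * ρ * (U k)ᴴ * ρ)
          - Matrix.trace (ρ * ρ)) := by
        exact add_le_add_left s1 _
    _ ≤ 0 + 0 := by
        apply add_le_add_right
        exact mul_nonpos_of_nonneg_of_nonpos hβ' s2
    _ = 0 := by ring
end

section
/- (LaSalle invariance principle.) Let E be a finite-dimensional real normed vector space and let φ : ℝ × E → E be a continuous flow (φ(0, x) = x and φ(s, φ(t, x)) = φ(s + t, x)). Let Ω ⊆ E be a compact set that is positively invariant, i.e. φ(t, x) ∈ Ω for all x ∈ Ω and t ≥ 0. Let F : E → ℝ be continuous with F ≥ 0 on Ω, and assume that for every x ∈ Ω the function t ↦ F(φ(t, x)) is nonincreasing on [0, ∞). Then for every x ∈ Ω the ω-limit set ω(x) := ∩_{T≥0} closure{φ(t, x) : t ≥ T} is nonempty, compact, contained in Ω, invariant under the flow (φ(t, y) ∈ ω(x) for all y ∈ ω(x) and t ∈ ℝ), F is constant on each forward orbit inside ω(x) (F(φ(t,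 y)) = F(y) for all y ∈ ω(x), t ≥ 0), and the distance from φ(t, x) to ω(x) tends to 0 as t → +∞. -/
open Filter Topology

/-- The ω-limit set of the point `x` under the flow `φ`:
`ω(x) = ∩_{T ≥ 0} closure {φ(t, x) : t ≥ T}`. -/
def omegaLimitSet {E : Type*} [TopologicalSpace E] (φ : ℝ → E → E) (x : E) : Set E :=
  ⋂ T ∈ Set.Ici (0 : ℝ), closure ((fun t => φ t x) '' Set.Ici T)

/-- **LaSalle invariance principle.**  Let `φ` be a continuous flow on a
finite-dimensional real normed vector space `E`, let `Ω` be a compact positively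
invariant set, and let `F` be a continuous function, nonnegative on `Ω`, which is
nonincreasing along forward trajectories in `Ω`.  Then for every `x ∈ Ω` the ω-limit
set `ω(x)` is nonempty, compact, contained in `Ω`, invariant under the flow, `F` is
constant on each forward orbit inside `ω(x)`, and the distance from `φ(t, x)` to
`ω(x)` tends to `0` as `t → +∞`. -/
theorem lasalle_invariance_principle
    {E : Type*} [NormedAddCommGroup E] [NormedSpace ℝ E] [FiniteDimensional ℝ E]
    (φ : ℝ → E → E)
    (hφcont : Continuous fun q : ℝ × E => φ q.1 q.2)
    (hφ0 : ∀ x : E, φ 0 x = x)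
    (hφadd : ∀ s t : ℝ, ∀ x : E, φ s (φ t x) = φ (s + t) x)
    (Ω : Set E) (hΩcompact : IsCompact Ω)
    (hΩinv : ∀ x ∈ Ω, ∀ t : ℝ, 0 ≤ t → φ t x ∈ Ω)
    (F : E → ℝ) (hFcont : Continuous F)
    (hFnonneg : ∀ x ∈ Ω, 0 ≤ F x)
    (hFdecr : ∀ x ∈ Ω, ∀ s t : ℝ, 0 ≤ s → s ≤ t → F (φ t x) ≤ F (φ s x))
    (x : E) (hx : x ∈ Ω) :
    (omegaLimitSet φ x).Nonempty ∧
    IsCompact (omegaLimitSet φ x) ∧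
    omegaLimitSet φ x ⊆ Ω ∧
    (∀ y ∈ omegaLimitSet φ x, ∀ t : ℝ, φ t y ∈ omegaLimitSet φ x) ∧
    (∀ y ∈ omegaLimitSet φ x, ∀ t : ℝ, 0 ≤ t → F (φ t y) = F y) ∧
    Tendsto (fun t : ℝ => Metric.infDist (φ t x) (omegaLimitSet φ x)) atTop (𝓝 0) := by
  -- the sequence of tail closures
  set K : ℕ → Set E := fun n => closure ((fun t => φ t x) '' Set.Ici (n : ℝ)) with hK
  have hKsubΩ : ∀ n, K n ⊆ Ω := by
    intro n
    apply closure_minimal _ hΩcompact.isClosed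
    rintro _ ⟨t, ht, rfl⟩
    exact hΩinv x hx t (le_trans (Nat.cast_nonneg n) ht)
  have hKclosed : ∀ n, IsClosed (K n) := fun n => isClosed_closure
  have hKcompact : ∀ n, IsCompact (K n) :=
    fun n => hΩcompact.of_isClosed_subset (hKclosed n) (hKsubΩ n)
  have hKanti : ∀ m n : ℕ, m ≤ n → K n ⊆ K m := by
    intro m n hmn
    exact closure_mono (Set.image_mono (Set.Ici_subset_Ici.2 (by exact_mod_cast hmn)))
  have hKne : ∀ n, (K n).Nonempty :=
    fun n => ⟨φ n x, subset_closure ⟨(n : ℝ), Set.self_mem_Ici, rfl⟩⟩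
  have hmemtail : ∀ T : ℝ, 0 ≤ T → ∀ z ∈ omegaLimitSet φ x,
      z ∈ closure ((fun t => φ t x) '' Set.Ici T) := by
    intro T hT z hz
    exact Set.mem_iInter₂.1 hz T hT
  -- ω(x) as a countable intersection
  have hω : omegaLimitSet φ x = ⋂ n, K n := by
    apply Set.Subset.antisymm
    · intro z hz
      exact Set.mem_iInter.2 fun n => hmemtail (n : ℝ) (Nat.cast_nonneg n) z hz
    · intro z hz
      apply Set.mem_iInter₂.2
      intro T hT
      obtain ⟨n, hn⟩ := exists_nat_ge T
      exact closure_mono (Set.image_mono (Set.Ici_subset_Ici.2 hn)) (Set.mem_iInter.1 hz n)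
  -- nonempty
  have hne : (omegaLimitSet φ x).Nonempty := by
    rw [hω]
    exact IsCompact.nonempty_iInter_of_sequence_nonempty_isCompact_isClosed K
      (fun n => hKanti n (n + 1) (Nat.le_succ n)) hKne (hKcompact 0) hKclosed
  -- contained in Ω
  have hsubΩ : omegaLimitSet φ x ⊆ Ω := by
    rw [hω]
    exact (Set.iInter_subset K 0).trans (hKsubΩ 0)
  -- compact
  have hcpt : IsCompact (omegaLimitSet φ x) := by
    rw [hω]
    exact (hKcompact 0).of_isClosed_subset (isClosed_iInter hKclosed) (Set.iInter_subset K 0)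
  -- invariance
  have hinv : ∀ y ∈ omegaLimitSet φ x, ∀ t : ℝ, φ t y ∈ omegaLimitSet φ x := by
    intro y hy t
    apply Set.mem_iInter₂.2
    intro T hT
    have hgcont : Continuous fun z => φ t z :=
      hφcont.comp (continuous_const.prodMk continuous_id)
    rw [mem_closure_iff]
    intro O hO hmemO
    have hy' := hmemtail (max 0 (T - t)) (le_max_left _ _) y hy
    rw [mem_closure_iff] at hy'
    obtain ⟨w, hw1, hw2⟩ := hy' ((fun z => φ t z) ⁻¹' O) (hO.preimage hgcont) hmemO
    obtain ⟨s, hs, rfl⟩ := hw2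
    refine ⟨φ (t + s) x, ?_, ⟨t + s, ?_, rfl⟩⟩
    · rw [← hφadd t s x]; exact hw1
    · have hTt : T - t ≤ s := le_trans (le_max_right _ _) hs
      simp only [Set.mem_Ici]
      linarith
  -- the limit value of F along the trajectory
  set g : ℝ → ℝ := fun t => F (φ (max t 0) x) with hg
  have hganti : Antitone g := by
    intro s t hst
    exact hFdecr x hx (max s 0) (max t 0) (le_max_right _ _)
      (max_le_max hst (le_refl 0))
  have hgbdd : BddBelow (Set.range g) := by
    refine ⟨0, ?_⟩
    rintro _ ⟨t, rfl⟩
    exact hFnonneg _ (hΩinv x hx (max t 0) (le_max_right _ _))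
  set c : ℝ := ⨅ t, g t with hc
  have hgtendsto : Tendsto g atTop (𝓝 c) := tendsto_atTop_ciInf hganti hgbdd
  -- F is constantly c on ω(x)
  have hFconst : ∀ y ∈ omegaLimitSet φ x, F y = c := by
    intro y hy
    have key : ∀ ε : ℝ, 0 < ε → |F y - c| ≤ ε := by
      intro ε hε
      have := Metric.tendsto_nhds.1 hgtendsto ε hε
      obtain ⟨T, hT⟩ := eventually_atTop.1 this
      have hsub : (fun t => φ t x) '' Set.Ici (max T 0) ⊆ {z | |F z - c| ≤ ε} := by
        rintro _ ⟨s, hs, rfl⟩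
        have hs0 : (0 : ℝ) ≤ s := le_trans (le_max_right _ _) hs
        have := hT s (le_trans (le_max_left _ _) hs)
        rw [Real.dist_eq, hg] at this
        simpa [max_eq_left hs0] using this.le
      have hclosed : IsClosed {z : E | |F z - c| ≤ ε} := by
        have : {z : E | |F z - c| ≤ ε} = (fun z => |F z - c|) ⁻¹' Set.Iic ε := rfl
        rw [this]
        exact isClosed_Iic.preimage ((hFcont.sub continuous_const).abs)
      exact closure_minimal hsub hclosed (hmemtail (max T 0) (le_max_right _ _) y hy)
    have h0 : |F y - c| ≤ 0 := by
      by_contra h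
      push_neg at h
      have := key (|F y - c| / 2) (by linarith)
      linarith
    have := abs_nonneg (F y - c)
    have : F y - c = 0 := by
      have := abs_eq_zero.1 (le_antisymm h0 (abs_nonneg _))
      exact this
    linarith
  -- eventually the trajectory is in any open neighborhood of ω(x)
  have hev : ∀ U : Set E, IsOpen U → omegaLimitSet φ x ⊆ U →
      ∀ᶠ t in atTop, φ t x ∈ U := by
    intro U hU hsub
    have hnot : ¬ ∀ n, (K n ∩ Uᶜ).Nonempty := by
      intro h
      have hdir : ∀ n, K (n + 1) ∩ Uᶜ ⊆ K n ∩ Uᶜ :=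
        fun n => Set.inter_subset_inter_left _ (hKanti n (n + 1) (Nat.le_succ n))
      obtain ⟨z, hz⟩ := IsCompact.nonempty_iInter_of_sequence_nonempty_isCompact_isClosed
        (fun n => K n ∩ Uᶜ) hdir h
        ((hKcompact 0).inter_right (hU.isClosed_compl))
        (fun n => (hKclosed n).inter hU.isClosed_compl)
      have hz1 : z ∈ omegaLimitSet φ x := by
        rw [hω]
        exact Set.mem_iInter.2 fun n => (Set.mem_iInter.1 hz n).1
      exact (Set.mem_iInter.1 hz 0).2 (hsub hz1)
    push_neg at hnot
    obtain ⟨n, hn⟩ := hnot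
    filter_upwards [eventually_ge_atTop (n : ℝ)] with t ht
    by_contra hmem
    have : φ t x ∈ K n ∩ Uᶜ := ⟨subset_closure ⟨t, ht, rfl⟩, hmem⟩
    rw [hn] at this
    exact this
  -- convergence of the distance
  have hdist : Tendsto (fun t : ℝ => Metric.infDist (φ t x) (omegaLimitSet φ x))
      atTop (𝓝 0) := by
    rw [Metric.tendsto_nhds]
    intro ε hε
    have := hev (Metric.thickening ε (omegaLimitSet φ x)) Metric.isOpen_thickening
      (Metric.self_subset_thickening hε _)
    filter_upwards [this] with t ht
    rw [Real.dist_eq, sub_zero, abs_of_nonneg Metric.infDist_nonneg]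
    exact (Metric.mem_thickening_iff_infDist_lt hne).1 ht
  refine ⟨hne, hcpt, hsubΩ, hinv, ?_, hdist⟩
  intro y hy t _
  rw [hFconst y hy, hFconst (φ t y) (hinv y hy t)]
end
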